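/- Let b be a real number with 0 < b, let n, f, m be natural numbers with m < 2^n. Then b^(m / 2^f) = ∏_{j=0}^{n-1} c_j, where c_j = b^(2^j / 2^f) if the j-th bit of m is 1 and c_j = 1 otherwise. Here all exponentiations with real exponents are real powers (rpow). -/
import Mathlib

lemma nat_eq_sum_testBit (n : ℕ) : ∀ m : ℕ, m < 2 ^ n →
    m = ∑ j ∈ Finset.range n, (if Nat.testBit m j then 2 ^ j else 0) := by
  induction n with
  | zero => intro m hm; interval_cases m; simp
  | succ n ih =>
    intro m hm
    rw [Finset.sum_range_succ']
    have h2 : m / 2 < 2 ^ n := by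
      apply Nat.div_lt_of_lt_mul; rw [pow_succ] at hm; omega
    have hd := ih (m / 2) h2
    simp only [Nat.testBit_succ]
    have h0 : (if Nat.testBit m 0 then 2 ^ 0 else 0) = m % 2 := by
      rcases Nat.mod_two_eq_zero_or_one m with h | h <;> simp [Nat.testBit_zero, h]
    have hs : ∑ j ∈ Finset.range n, (if Nat.testBit (m / 2) j then 2 ^ (j + 1) else 0)
        = 2 * (m / 2) := by
      have : ∀ j ∈ Finset.range n, (if Nat.testBit (m / 2) j then 2 ^ (j + 1) else 0)
          = 2 * (if Nat.testBit (m / 2) j then 2 ^ j else 0) := by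
        intro j _; split <;> simp [pow_succ, mul_comm]
      rw [Finset.sum_congr rfl this, ← Finset.mul_sum, ← hd]
    omega

/-- Correctness of EXP for nonnegative fixed-point powers. -/
theorem exp_correct_nonneg (b : ℝ) (hb : 0 < b) (n f m : ℕ) (hm : m < 2 ^ n) :
    b ^ ((m : ℝ) / 2 ^ f) =
      ∏ j ∈ Finset.range n,
        (if Nat.testBit m j then b ^ ((2 ^ j : ℝ) / 2 ^ f) else 1) := by
  have key : (m : ℝ) / 2 ^ f =
      ∑ j ∈ Finset.range n, (if Nat.testBit m j then (2 ^ j : ℝ) / 2 ^ f else 0) := by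
    have step : ∀ j ∈ Finset.range n, (if Nat.testBit m j then (2 ^ j : ℝ) / 2 ^ f else 0)
        = (if Nat.testBit m j then (2 ^ j : ℝ) else 0) / 2 ^ f := by
      intro j _; split <;> simp
    rw [Finset.sum_congr rfl step, ← Finset.sum_div]
    congr 1
    have := nat_eq_sum_testBit n m hm
    calc (m : ℝ) = ((∑ j ∈ Finset.range n, (if Nat.testBit m j then 2 ^ j else 0) : ℕ) : ℝ) := by
          exact_mod_cast congrArg Nat.cast this
      _ = _ := by push_cast; apply Finset.sum_congr rfl; intro j _; split <;> simp
  rw [key, Real.rpow_sum_of_pos hb]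
  apply Finset.prod_congr rfl
  intro j _
  split <;> simp
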